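/- arXiv:1206.0567 — 2 statements merged into one kernel-verified Lean document; each statement's English description precedes it below -/
import Mathlib

section
/- Let X ⊆ ℝ, let f(x;θ) be a family of probability densities on X with q > 0, M_q[f;θ] = ∫_X f(x;θ)^q dx finite and positive, let θ̂ : X → ℝ be an estimator, and let α > 1, β be Hölder conjugates (1/α + 1/β = 1). Assume differentiation under the integral sign is valid for the q-bias B_q(θ) = ∫_X (θ̂(x) − θ) f(x;θ)^q / M_q[f;θ] dx, i.e. 1 + B_q'(θ) = ∫_X (θ̂(x) − θ) ∂_θ[f(x;θ)^q / M_q[f;θ]] dx. If moreover there is c(θ) > 0 such that for almost every x, (q / M_q[f;θ]^{1/q}) · ∂_θ ln_{q*}(f(x;θ) / M_q[f;θ]^{1/q}) = c(θ) · sign(θ̂(x) − θ) · |θ̂(x) − θ|^{α−1} with q* = 2 − q, then equality holds: (∫_X |θ̂(x) − θ|^α f(x;θ) dx)^{1/α} · I_{β,q}[f;θ]^{1/β} = |1 + B_q'(θ)|, where I_{β,q}[f;θ] = ∫_X |(f(x;θ)^{q−1}/M_q[f;θ]) ∂_θ ln(f(x;θ)^q/M_q[f;θ])|^β f(x;θ)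 dx. -/
open MeasureTheory Real

/-- The deformed (Tsallis) `q`-logarithm: `ln_q(x) = (x^(1-q) - 1)/(1-q)`. -/
noncomputable def lnq (p x : ℝ) : ℝ := (x ^ (1 - p) - 1) / (1 - p)

section Aux

open Filter

lemma aux_min (φ : ℝ → ℝ) (θ : ℝ) (h : ∀ t, 0 ≤ φ t) (h0 : φ θ = 0) : deriv φ θ = 0 := by
  have hmin : IsLocalMin φ θ := Filter.Eventually.of_forall (fun t => by rw [h0]; exact h t)
  exact hmin.deriv_eq_zero

lemma deriv_comp_key (φ F G : ℝ → ℝ) (θ : ℝ)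
    (hF : DifferentiableAt ℝ F (φ θ))
    (hG : DifferentiableAt ℝ G (F (φ θ)))
    (hinv : ∀ d : ℝ, d ≠ 0 → HasDerivAt (fun t => F (φ t)) d θ →
      ∀ᶠ t in nhds θ, G (F (φ t)) = φ t) :
    deriv (fun t => F (φ t)) θ = deriv F (φ θ) * deriv φ θ := by
  by_cases hφ : DifferentiableAt ℝ φ θ
  · exact deriv_comp θ hF hφ
  · rw [deriv_zero_of_not_differentiableAt hφ, mul_zero]
    by_cases hc : DifferentiableAt ℝ (fun t => F (φ t)) θ
    · by_contra hd
      have hder := hc.hasDerivAt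
      have hev := hinv _ hd hder
      have hdiff : DifferentiableAt ℝ (fun t => G (F (φ t))) θ := hG.comp θ hc
      exact hφ (hdiff.congr_of_eventuallyEq (hev.mono fun t ht => ht.symm))
    · exact deriv_zero_of_not_differentiableAt hc

lemma deriv_log_comp (φ : ℝ → ℝ) (θ : ℝ) (hφ : ∀ t, 0 ≤ φ t) (hy : 0 < φ θ) :
    deriv (fun t => Real.log (φ t)) θ = (φ θ)⁻¹ * deriv φ θ := by
  have hF : DifferentiableAt ℝ Real.log (φ θ) := Real.differentiableAt_log hy.ne'
  have hlog : deriv Real.log (φ θ) = (φ θ)⁻¹ := Real.deriv_log (φ θ)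
  rw [← hlog]
  apply deriv_comp_key φ Real.log Real.exp θ hF (Real.differentiable_exp.differentiableAt)
  intro d hd hder
  by_cases hy1 : Real.log (φ θ) = 0
  · have hslope : Tendsto (slope (fun t => Real.log (φ t)) θ) (nhdsWithin θ {θ}ᶜ) (nhds d) :=
      (hasDerivAt_iff_tendsto_slope).mp hder
    have hne : ∀ᶠ t in nhdsWithin θ {θ}ᶜ, slope (fun t => Real.log (φ t)) θ t ≠ 0 :=
      hslope.eventually_ne hd
    rw [eventually_nhdsWithin_iff] at hne
    filter_upwards [hne] with t ht
    by_cases htθ : t = θ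
    · rw [htθ]; exact Real.exp_log hy
    · have hst := ht (by simpa using htθ)
      have hLt : Real.log (φ t) ≠ 0 := by
        intro h0
        apply hst
        simp [slope, h0, hy1]
      have hφt : 0 < φ t := by
        rcases (hφ t).lt_or_eq with h | h
        · exact h
        · exact absurd (by rw [← h, Real.log_zero]) hLt
      exact Real.exp_log hφt
  · have hcont : ContinuousAt (fun t => Real.log (φ t)) θ := hder.continuousAt
    have hev : ∀ᶠ t in nhds θ, Real.log (φ t) ≠ 0 := hcont.eventually_ne hy1
    filter_upwards [hev] with t ht
    have hφt : 0 < φ t := by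
      rcases (hφ t).lt_or_eq with h | h
      · exact h
      · exact absurd (by rw [← h, Real.log_zero]) ht
    exact Real.exp_log hφt

lemma deriv_lnqF_comp (q : ℝ) (hq : 0 < q) (hq1 : q ≠ 1) (φ : ℝ → ℝ) (θ : ℝ)
    (hφ : ∀ t, 0 ≤ φ t) (hy : 0 < φ θ) :
    deriv (fun t => ((φ t) ^ ((q-1)/q) - 1)/(q-1)) θ
      = ((φ θ) ^ (-(1/q)) / q) * deriv φ θ := by
  have hq0 : q ≠ 0 := hq.ne'
  have hq1' : q - 1 ≠ 0 := sub_ne_zero.mpr hq1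
  set r : ℝ := (q-1)/q with hr
  have hr0 : r ≠ 0 := div_ne_zero hq1' hq0
  have hFd : HasDerivAt (fun u : ℝ => (u ^ r - 1)/(q-1)) (r * (φ θ) ^ (r-1) / (q-1)) (φ θ) :=
    ((Real.hasDerivAt_rpow_const (Or.inl hy.ne')).sub_const 1).div_const (q-1)
  have hF : DifferentiableAt ℝ (fun u : ℝ => (u ^ r - 1)/(q-1)) (φ θ) := hFd.differentiableAt
  have hGF : ∀ u : ℝ, 0 ≤ u → ((q-1) * ((u ^ r - 1)/(q-1)) + 1) ^ (q/(q-1)) = u := by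
    intro u hu
    have h1 : (q-1) * ((u ^ r - 1)/(q-1)) + 1 = u ^ r := by field_simp; ring
    have h2 : r * (q/(q-1)) = 1 := by rw [hr]; field_simp
    rw [h1, ← Real.rpow_mul hu, h2, Real.rpow_one]
  have hG : DifferentiableAt ℝ (fun v : ℝ => ((q-1)*v + 1) ^ (q/(q-1)))
      (((φ θ) ^ r - 1)/(q-1)) := by
    have hin : (q-1) * (((φ θ)^r - 1)/(q-1)) + 1 = (φ θ)^r := by field_simp; ring
    apply DifferentiableAt.rpow_const
    · exact (differentiableAt_id.const_mul _).add_const 1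
    · left; rw [hin]; exact (Real.rpow_pos_of_pos hy r).ne'
  have key : deriv (fun t => ((φ t) ^ r - 1)/(q-1)) θ
      = deriv (fun u : ℝ => (u ^ r - 1)/(q-1)) (φ θ) * deriv φ θ :=
    deriv_comp_key φ _ _ θ hF hG (fun d _ _ => Eventually.of_forall fun t => hGF (φ t) (hφ t))
  rw [key, hFd.deriv]
  have hr1 : r - 1 = -(1/q) := by rw [hr]; field_simp; ring
  rw [hr1, hr]
  field_simp

lemma lnq_eq_aux (q : ℝ) (hq : 0 < q) (g m : ℝ) (hg : 0 ≤ g) (hm : 0 < m) :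
    lnq (2 - q) (g / m ^ (1/q)) = ((g ^ q / m) ^ ((q-1)/q) - 1) / (q-1) := by
  have hq0 : q ≠ 0 := hq.ne'
  unfold lnq
  have h1 : 1 - (2 - q) = q - 1 := by ring
  rw [h1]
  congr 2
  rw [Real.div_rpow hg (Real.rpow_nonneg hm.le _),
      Real.div_rpow (Real.rpow_nonneg hg q) hm.le,
      ← Real.rpow_mul hg, ← Real.rpow_mul hm.le]
  congr 2
  · field_simp
  · ring

lemma sign_mul_self_eq_abs (v : ℝ) : v * Real.sign v = |v| := by
  rcases lt_trichotomy v 0 with h | h | h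
  · rw [Real.sign_of_neg h, abs_of_neg h]; ring
  · simp [h]
  · rw [Real.sign_of_pos h, abs_of_pos h]; ring

lemma abs_sign_of_ne (v : ℝ) (h : v ≠ 0) : |Real.sign v| = 1 := by
  rcases h.lt_or_gt with h' | h'
  · rw [Real.sign_of_neg h']; norm_num
  · rw [Real.sign_of_pos h']; norm_num

end Aux

/-- **Equality case of the generalized q-Cramér–Rao inequality.**
If the score condition
`(q / M_q^{1/q}) ∂_θ ln_{q*}(f / M_q^{1/q}) = c(θ) sign(θhat - θ) |θhat - θ|^{α-1}`
holds almost everywhere on `X` (with `q* = 2 - q` and `c(θ) > 0`), then the generalized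
`q`-Cramér–Rao inequality is saturated. -/
theorem generalized_q_cramer_rao_equality
    (X : Set ℝ) (hX : MeasurableSet X)
    (f : ℝ → ℝ → ℝ) (θhat : ℝ → ℝ) (θ : ℝ) (q α β : ℝ)
    (hf_meas : Measurable (Function.uncurry f))
    (hf_nonneg : ∀ t : ℝ, ∀ x ∈ X, 0 ≤ f t x)
    (hf_int : ∀ t : ℝ, IntegrableOn (f t) X)
    (hf_prob : ∀ t : ℝ, ∫ x in X, f t x = 1)
    (hq : 0 < q)
    (Mq : ℝ → ℝ) (hMq : ∀ t : ℝ, Mq t = ∫ x in X, f t x ^ q)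
    (hMq_int : ∀ t : ℝ, IntegrableOn (fun x => f t x ^ q) X)
    (hMq_pos : ∀ t : ℝ, 0 < Mq t)
    (hα : 1 < α) (hαβ : 1 / α + 1 / β = 1)
    -- the q-bias
    (Bq : ℝ → ℝ)
    (hBq : ∀ t : ℝ, Bq t = ∫ x in X, (θhat x - t) * (f t x ^ q / Mq t))
    -- differentiation under the integral sign is valid:
    (B' : ℝ) (hB'1 : HasDerivAt Bq B' θ)
    (hB'2 : 1 + B' =
      ∫ x in X, (θhat x - θ) * deriv (fun t => f t x ^ q / Mq t) θ)
    -- the proportionality (score) condition, with c(θ) > 0, a.e. on X: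
    (c : ℝ) (hc : 0 < c)
    (heq : ∀ᵐ x ∂(volume.restrict X),
      q / Mq θ ^ (1 / q) *
          deriv (fun t => lnq (2 - q) (f t x / Mq t ^ (1 / q))) θ
        = c * Real.sign (θhat x - θ) * |θhat x - θ| ^ (α - 1)) :
    (∫ x in X, |θhat x - θ| ^ α * f θ x) ^ (1 / α) *
      (∫ x in X,
        |f θ x ^ (q - 1) / Mq θ * deriv (fun t => Real.log (f t x ^ q / Mq t)) θ| ^ β
          * f θ x) ^ (1 / β)
      = |1 + B'| := by
  have hq0 : q ≠ 0 := hq.ne'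
  have hα0 : (0:ℝ) < α := lt_trans one_pos hα
  have hαne : α ≠ 0 := hα0.ne'
  have hα1ne : α - 1 ≠ 0 := sub_ne_zero.mpr hα.ne'
  have h1b : 1/β = 1 - 1/α := by linarith
  have h1bpos : 0 < 1/β := by
    rw [h1b]
    have h : 1/α < 1 := by rw [div_lt_one hα0]; linarith
    linarith
  have hβpos : 0 < β := one_div_pos.mp h1bpos
  have hβne : β ≠ 0 := hβpos.ne'
  have hαβ' : (α - 1) * β = α := by
    have h := h1b
    field_simp at h
    linarith
  by_cases hq1 : q = 1
  · -- degenerate case q = 1 : the score function vanishes, so θhat = θ a.e.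
    subst hq1
    have hzero : ∀ᵐ x ∂(volume.restrict X), θhat x = θ := by
      filter_upwards [heq] with x hx
      have h0 : (fun t => lnq (2 - 1) (f t x / Mq t ^ (1/(1:ℝ)))) = fun _ => (0:ℝ) := by
        funext t
        simp [lnq, show (1:ℝ) - (2 - 1) = 0 by norm_num]
      rw [h0, deriv_const] at hx
      rw [mul_zero] at hx
      by_contra hne
      have hu : θhat x - θ ≠ 0 := sub_ne_zero.mpr hne
      have h1 : Real.sign (θhat x - θ) ≠ 0 := by
        intro h
        have h2 := abs_sign_of_ne _ hu
        rw [h] at h2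
        simp at h2
      have h2 : (0:ℝ) < |θhat x - θ| ^ (α-1) := Real.rpow_pos_of_pos (abs_pos.mpr hu) _
      exact (mul_ne_zero (mul_ne_zero hc.ne' h1) h2.ne') hx.symm
    have hE : (∫ x in X, |θhat x - θ| ^ α * f θ x) = 0 := by
      have h : (fun x => |θhat x - θ| ^ α * f θ x)
          =ᵐ[volume.restrict X] (fun _ => (0:ℝ)) := by
        filter_upwards [hzero] with x hx
        rw [hx]
        simp [Real.zero_rpow hαne]
      rw [integral_congr_ae h, integral_zero]
    have hB : (1:ℝ) + B' = 0 := by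
      rw [hB'2]
      have h : (fun x => (θhat x - θ) * deriv (fun t => f t x ^ (1:ℝ) / Mq t) θ)
          =ᵐ[volume.restrict X] (fun _ => (0:ℝ)) := by
        filter_upwards [hzero] with x hx
        rw [hx]
        simp
      rw [integral_congr_ae h, integral_zero]
    rw [hE, hB, Real.zero_rpow (one_div_ne_zero hαne), zero_mul, abs_zero]
  · -- main case q ≠ 1
    have hpt : ∀ᵐ x ∂(volume.restrict X),
        ((θhat x - θ) * deriv (fun t => f t x ^ q / Mq t) θ
            = c * (|θhat x - θ| ^ α * f θ x))
        ∧ (|f θ x ^ (q - 1) / Mq θ * deriv (fun t => Real.log (f t x ^ q / Mq t)) θ| ^ β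
              * f θ x
            = c ^ β * (|θhat x - θ| ^ α * f θ x)) := by
      filter_upwards [heq, ae_restrict_mem hX] with x hx hxX
      have hφnn : ∀ t, 0 ≤ f t x ^ q / Mq t :=
        fun t => div_nonneg (Real.rpow_nonneg (hf_nonneg t x hxX) q) (hMq_pos t).le
      have hfun : (fun t => lnq (2 - q) (f t x / Mq t ^ (1 / q)))
          = fun t => ((f t x ^ q / Mq t) ^ ((q-1)/q) - 1)/(q-1) :=
        funext fun t => lnq_eq_aux q hq (f t x) (Mq t) (hf_nonneg t x hxX) (hMq_pos t)
      rw [hfun] at hx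
      by_cases hg0 : f θ x = 0
      · have hφ0 : f θ x ^ q / Mq θ = 0 := by
          rw [hg0, Real.zero_rpow hq0, zero_div]
        have hD : deriv (fun t => f t x ^ q / Mq t) θ = 0 :=
          aux_min _ θ hφnn hφ0
        constructor
        · rw [hD, mul_zero, hg0, mul_zero, mul_zero]
        · rw [hg0, mul_zero, mul_zero, mul_zero]
      · have hgpos : 0 < f θ x := lt_of_le_of_ne (hf_nonneg θ x hxX) (Ne.symm hg0)
        have hy : 0 < f θ x ^ q / Mq θ :=
          div_pos (Real.rpow_pos_of_pos hgpos q) (hMq_pos θ)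
        have hL1 : deriv (fun t => ((f t x ^ q / Mq t) ^ ((q-1)/q) - 1)/(q-1)) θ
            = ((f θ x ^ q / Mq θ) ^ (-(1/q)) / q) * deriv (fun t => f t x ^ q / Mq t) θ :=
          deriv_lnqF_comp q hq hq1 (fun t => f t x ^ q / Mq t) θ hφnn hy
        rw [hL1] at hx
        -- simplify the coefficient in hx
        have hMpow : (0:ℝ) < Mq θ ^ (1/q) := Real.rpow_pos_of_pos (hMq_pos θ) _
        have hAB : Mq θ ^ (1/q) * (f θ x ^ q / Mq θ) ^ (1/q) = f θ x := by
          rw [← Real.mul_rpow (hMq_pos θ).le hy.le]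
          have h : Mq θ * (f θ x ^ q / Mq θ) = f θ x ^ q := by
            rw [mul_comm, div_mul_cancel₀ _ (hMq_pos θ).ne']
          rw [h, ← Real.rpow_mul (hf_nonneg θ x hxX), mul_one_div_cancel hq0, Real.rpow_one]
        have hcoef : q / Mq θ ^ (1/q) * ((f θ x ^ q / Mq θ) ^ (-(1/q)) / q)
            = (f θ x)⁻¹ := by
          have hBpow : (0:ℝ) < (f θ x ^ q / Mq θ) ^ (1/q) := Real.rpow_pos_of_pos hy _
          have key : ∀ A B : ℝ, 0 < A → 0 < B → q / A * (B⁻¹ / q) = (A * B)⁻¹ := by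
            intro A B hA hB
            field_simp
          rw [Real.rpow_neg hy.le, key _ _ hMpow hBpow, hAB]
        rw [← mul_assoc, hcoef] at hx
        have hDφ : deriv (fun t => f t x ^ q / Mq t) θ
            = (c * Real.sign (θhat x - θ) * |θhat x - θ| ^ (α - 1)) * f θ x := by
          field_simp at hx
          linarith [hx]
        constructor
        · rw [hDφ]
          have h1 : (θhat x - θ) *
              (c * Real.sign (θhat x - θ) * |θhat x - θ| ^ (α - 1) * f θ x)
              = c * (((θhat x - θ) * Real.sign (θhat x - θ)) * |θhat x - θ| ^ (α - 1) * f θ x) := by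
            ring
          rw [h1, sign_mul_self_eq_abs]
          by_cases hu : θhat x - θ = 0
          · rw [hu]; simp [Real.zero_rpow hαne, Real.zero_rpow hα1ne]
          · have habs : |θhat x - θ| * |θhat x - θ| ^ (α - 1) = |θhat x - θ| ^ α := by
              have h2 := Real.rpow_add (abs_pos.mpr hu) 1 (α - 1)
              rw [Real.rpow_one] at h2
              rw [← h2, show (1:ℝ) + (α - 1) = α by ring]
            rw [habs]
        · have hL2 : deriv (fun t => Real.log (f t x ^ q / Mq t)) θ
              = (f θ x ^ q / Mq θ)⁻¹ * deriv (fun t => f t x ^ q / Mq t) θ :=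
            deriv_log_comp (fun t => f t x ^ q / Mq t) θ hφnn hy
          have hpow : f θ x ^ (q - 1) * f θ x = f θ x ^ q := by
            rw [← Real.rpow_add_one hg0 (q-1)]
            norm_num
          have hS : f θ x ^ (q - 1) / Mq θ * deriv (fun t => Real.log (f t x ^ q / Mq t)) θ
              = c * Real.sign (θhat x - θ) * |θhat x - θ| ^ (α - 1) := by
            rw [hL2, hDφ]
            have hMne : Mq θ ≠ 0 := (hMq_pos θ).ne'
            have hqne : f θ x ^ q ≠ 0 := (Real.rpow_pos_of_pos hgpos q).ne'
            field_simp
            linear_combination (Real.sign (θhat x - θ) * |θhat x - θ| ^ (α - 1)) * hpow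
          rw [hS]
          have habsR : |c * Real.sign (θhat x - θ) * |θhat x - θ| ^ (α - 1)|
              = c * |θhat x - θ| ^ (α - 1) := by
            by_cases hu : θhat x - θ = 0
            · rw [hu]; simp [Real.zero_rpow hα1ne]
            · rw [abs_mul, abs_mul, abs_of_pos hc, abs_sign_of_ne _ hu,
                abs_of_nonneg (Real.rpow_nonneg (abs_nonneg _) _), mul_one]
          rw [habsR, Real.mul_rpow hc.le (Real.rpow_nonneg (abs_nonneg _) _),
            ← Real.rpow_mul (abs_nonneg _), hαβ']
          ring
    have hE0 : 0 ≤ ∫ x in X, |θhat x - θ| ^ α * f θ x :=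
      integral_nonneg_of_ae ((ae_restrict_mem hX).mono fun x hx =>
        mul_nonneg (Real.rpow_nonneg (abs_nonneg _) _) (hf_nonneg θ x hx))
    have hB : 1 + B' = c * ∫ x in X, |θhat x - θ| ^ α * f θ x := by
      rw [hB'2, integral_congr_ae (hpt.mono fun x h => h.1), integral_const_mul]
    have hI : (∫ x in X,
          |f θ x ^ (q - 1) / Mq θ * deriv (fun t => Real.log (f t x ^ q / Mq t)) θ| ^ β
            * f θ x)
        = c ^ β * ∫ x in X, |θhat x - θ| ^ α * f θ x := by
      rw [integral_congr_ae (hpt.mono fun x h => h.2), integral_const_mul]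
    rw [hI, hB, abs_of_nonneg (mul_nonneg hc.le hE0)]
    rcases eq_or_lt_of_le hE0 with hE | hE
    · rw [← hE, mul_zero, mul_zero, Real.zero_rpow (one_div_ne_zero hαne), zero_mul]
    · have hcE : (c ^ β * ∫ x in X, |θhat x - θ| ^ α * f θ x) ^ (1/β)
          = c * (∫ x in X, |θhat x - θ| ^ α * f θ x) ^ (1/β) := by
        rw [Real.mul_rpow (Real.rpow_nonneg hc.le _) hE0, ← Real.rpow_mul hc.le,
          mul_one_div_cancel hβne, Real.rpow_one]
      rw [hcE,
        show (∫ x in X, |θhat x - θ| ^ α * f θ x) ^ (1/α) *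
            (c * (∫ x in X, |θhat x - θ| ^ α * f θ x) ^ (1/β))
          = c * ((∫ x in X, |θhat x - θ| ^ α * f θ x) ^ (1/α) *
            (∫ x in X, |θhat x - θ| ^ α * f θ x) ^ (1/β)) from by ring,
        ← Real.rpow_add hE, hαβ, Real.rpow_one]
end

section
/- (Saturation of the generalized q-Cramér–Rao inequality by generalized q-Gaussians.) Let α > 1, β its Hölder conjugate (1/α + 1/β = 1), q > 1 − α, q ≠ 1, γ > 0, and let G(x) = Z^{-1} (1 − (q−1) γ |x|^α)_+^{1/(q−1)} be the generalized q-Gaussian density on ℝ, where Z = ∫_ℝ (1 − (q−1) γ |x|^α)_+^{1/(q−1)} dx. Assume ∫_ℝ |x|^α G(x) dx and M_q[G] = ∫_ℝ G(x)^q dx are finite. Then equality holds in the generalized Cramér–Rao inequality: (∫_ℝ |x|^α G(x) dx)^{1/α} · I_{β,q}[G]^{1/β} = 1, where I_{β,q}[G] = (q/M_q[G])^β · ∫_ℝ |G(x)^{q−1} · G'(x)/G(x)|^β G(x) dx (the derivative taken in the interior of the support of G). -/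
set_option maxHeartbeats 1000000
open MeasureTheory Real Filter Set

private lemma abs_rpow_hasDeriv {α x : ℝ} (hα : 1 < α) (hx : x ≠ 0) :
    ∃ D : ℝ, HasDerivAt (fun y : ℝ => |y| ^ α) D x ∧ |D| = α * |x| ^ (α - 1) ∧
      x * D = α * |x| ^ α := by
  rcases hx.lt_or_gt with h | h
  · refine ⟨-(α * (-x) ^ (α - 1)), ?_, ?_, ?_⟩
    · have h1 : HasDerivAt (fun y : ℝ => (-y) ^ α) (α * (-x) ^ (α - 1) * (-1)) x :=
        (Real.hasDerivAt_rpow_const (x := -x) (p := α)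
          (Or.inl (by simpa using h.ne))).comp x (hasDerivAt_neg x)
      have hev : (fun y : ℝ => |y| ^ α) =ᶠ[nhds x] fun y => (-y) ^ α := by
        filter_upwards [Iio_mem_nhds h] with y hy
        rw [abs_of_neg hy]
      refine HasDerivAt.congr_of_eventuallyEq ?_ hev
      exact h1.congr_deriv (by ring)
    · rw [abs_of_neg h, abs_neg,
        abs_of_nonneg (mul_nonneg (by linarith) (Real.rpow_nonneg (by linarith) _))]
    · rw [abs_of_neg h]
      have : (-x) * (-x) ^ (α - 1) = (-x) ^ α := by
        rw [show α = 1 + (α - 1) by ring, Real.rpow_add (by linarith : (0:ℝ) < -x),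
          Real.rpow_one]
        ring_nf
      nlinarith [this]
  · refine ⟨α * x ^ (α - 1), ?_, ?_, ?_⟩
    · have h1 : HasDerivAt (fun y : ℝ => y ^ α) (α * x ^ (α - 1)) x :=
        Real.hasDerivAt_rpow_const (Or.inl hx)
      have hev : (fun y : ℝ => |y| ^ α) =ᶠ[nhds x] fun y => y ^ α := by
        filter_upwards [Ioi_mem_nhds h] with y hy
        rw [abs_of_pos hy]
      exact HasDerivAt.congr_of_eventuallyEq h1 hev
    · rw [abs_of_pos h, abs_of_nonneg (by positivity)]
    · rw [abs_of_pos h]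
      have : x * x ^ (α - 1) = x ^ α := by
        rw [show α = 1 + (α - 1) by ring, Real.rpow_add h, Real.rpow_one]
        ring_nf
      nlinarith [this]

private lemma ker_cont {α c p : ℝ} (hα : 1 < α) (h : 0 ≤ p ∨ c < 0) :
    Continuous (fun x : ℝ => max (1 - c * |x| ^ α) 0 ^ p) := by
  have hu : Continuous (fun x : ℝ => max (1 - c * |x| ^ α) 0) := by
    apply Continuous.max _ continuous_const
    exact (continuous_const.sub (continuous_const.mul
      ((continuous_abs).rpow_const (fun x => Or.inr (by linarith)))))
  rw [continuous_iff_continuousAt]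
  intro x
  apply (Real.continuousAt_rpow_const _ _ ?_).comp hu.continuousAt
  rcases h with hp | hc
  · exact Or.inr hp
  · left
    have : (1:ℝ) ≤ 1 - c * |x| ^ α := by nlinarith [Real.rpow_nonneg (abs_nonneg x) α]
    positivity

private lemma ker_deriv {α c p x : ℝ} (hα : 1 < α) (hx : x ≠ 0)
    (hu : 0 < 1 - c * |x| ^ α) {D : ℝ} (hD : HasDerivAt (fun y : ℝ => |y| ^ α) D x) :
    HasDerivAt (fun y : ℝ => max (1 - c * |y| ^ α) 0 ^ p)
      (p * (1 - c * |x| ^ α) ^ (p - 1) * (-c * D)) x := by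
  have hu' : HasDerivAt (fun y : ℝ => 1 - c * |y| ^ α) (-c * D) x := by
    simpa [neg_mul] using ((hD.const_mul c).const_sub 1)
  have h2 : HasDerivAt (fun y : ℝ => (1 - c * |y| ^ α) ^ p)
      ((-c * D) * p * (1 - c * |x| ^ α) ^ (p - 1)) x :=
    hu'.rpow_const (Or.inl hu.ne')
  have hev : (fun y : ℝ => max (1 - c * |y| ^ α) 0 ^ p) =ᶠ[nhds x]
      fun y => (1 - c * |y| ^ α) ^ p := by
    have hcont : Continuous (fun y : ℝ => 1 - c * |y| ^ α) :=
      continuous_const.sub (continuous_const.mul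
        ((continuous_abs).rpow_const (fun x => Or.inr (by linarith))))
    filter_upwards [hcont.continuousAt.preimage_mem_nhds (Ioi_mem_nhds hu)] with y hy
    rw [max_eq_left (le_of_lt hy)]
  refine HasDerivAt.congr_of_eventuallyEq ?_ hev
  exact h2.congr_deriv (by ring)

private lemma integrable_comp_abs_of {f : ℝ → ℝ} (hf : IntegrableOn (fun x => f |x|) (Ici 0)) :
    Integrable fun x : ℝ => f |x| := by
  have hIoi : IntegrableOn (fun x => f |x|) (Ioi 0) := hf.mono_set Ioi_subset_Ici_self
  have int_Iic : IntegrableOn (fun x => f |x|) (Iic 0) := by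
    rw [← Measure.map_neg_eq_self (volume : Measure ℝ)]
    have m : MeasurableEmbedding fun x : ℝ => -x := (Homeomorph.neg ℝ).measurableEmbedding
    rw [m.integrableOn_map_iff]
    simp_rw [Function.comp_def, abs_neg, neg_preimage, neg_Iic, neg_zero]
    exact hf
  rw [← integrableOn_univ, ← Iic_union_Ioi (a := (0:ℝ))]
  exact int_Iic.union hIoi

private lemma int_pos_of_pos_on {f : ℝ → ℝ} (hf : Integrable f) (hnn : ∀ x, 0 ≤ f x)
    {a b : ℝ} (hab : a < b) (hpos : ∀ x ∈ Ioo a b, 0 < f x) : 0 < ∫ x, f x := by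
  rw [integral_pos_iff_support_of_nonneg hnn hf]
  have hsub : Ioo a b ⊆ Function.support f := fun x hx => (hpos x hx).ne'
  calc (0:ENNReal) < volume (Ioo a b) := by
        rw [Real.volume_Ioo]; exact ENNReal.ofReal_pos.2 (by linarith)
    _ ≤ _ := measure_mono hsub

private lemma rpow_root_pow {α c : ℝ} (hα : 1 < α) (hc : 0 < c) :
    ((1 / c) ^ (1 / α)) ^ α = 1 / c := by
  rw [← Real.rpow_mul (by positivity), one_div_mul_cancel (by linarith : α ≠ 0), Real.rpow_one]

private lemma ker_integrable {α c p : ℝ} (hα : 1 < α)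
    (hcase : (0 < c ∧ 0 < p) ∨ (c < 0 ∧ α * p < -1)) :
    Integrable (fun x : ℝ => max (1 - c * |x| ^ α) 0 ^ p) := by
  rcases hcase with ⟨hc, hp⟩ | ⟨hc, hp⟩
  · -- compact support case
    refine (ker_cont hα (Or.inl hp.le)).integrable_of_hasCompactSupport ?_
    set r : ℝ := (1 / c) ^ (1 / α) with hr
    refine HasCompactSupport.intro (isCompact_Icc (a := -r) (b := r)) fun x hx => ?_
    have hrx : r < |x| := by
      rw [mem_Icc, ← abs_le] at hx
      exact lt_of_not_ge hx
    have h1 : (1:ℝ) / c < |x| ^ α := by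
      rw [← rpow_root_pow hα hc]
      exact Real.rpow_lt_rpow (by positivity) hrx (by linarith)
    have : 1 - c * |x| ^ α < 0 := by
      rw [sub_neg]
      calc (1:ℝ) = c * (1/c) := by field_simp
      _ < c * |x| ^ α := by exact (mul_lt_mul_iff_right₀ hc).2 h1
    rw [max_eq_right this.le, Real.zero_rpow hp.ne']
  · -- heavy tail case
    have hα0 : (0:ℝ) < α := by linarith
    have hp0 : p < 0 := by nlinarith
    have hxα : Continuous (fun x : ℝ => x ^ α) := by
      rw [continuous_iff_continuousAt]
      exact fun x => Real.continuousAt_rpow_const x α (Or.inr hα0.le)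
    have hbase : Continuous (fun x : ℝ => max (1 - c * x ^ α) 0) :=
      Continuous.max (continuous_const.sub (continuous_const.mul hxα)) continuous_const
    have hmeas : AEStronglyMeasurable (fun x : ℝ => max (1 - c * x ^ α) 0 ^ p) volume :=
      (hbase.measurable.pow measurable_const).aestronglyMeasurable
    have key : IntegrableOn (fun x : ℝ => max (1 - c * x ^ α) 0 ^ p) (Ici 0) := by
      have h01 : IntegrableOn (fun x : ℝ => max (1 - c * x ^ α) 0 ^ p) (Icc 0 1) := by
        apply ContinuousOn.integrableOn_compact isCompact_Icc
        apply ContinuousOn.rpow_const hbase.continuousOn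
        intro x hx
        left
        have : (0:ℝ) ≤ x ^ α := Real.rpow_nonneg hx.1 α
        have : (1:ℝ) ≤ 1 - c * x ^ α := by nlinarith
        positivity
      have h1i : IntegrableOn (fun x : ℝ => max (1 - c * x ^ α) 0 ^ p) (Ioi 1) := by
        have hint : IntegrableOn (fun x : ℝ => (-c) ^ p * x ^ (α * p)) (Ioi 1) :=
          ((integrableOn_Ioi_rpow_iff one_pos).2 hp).const_mul _
        refine Integrable.mono' hint hmeas.restrict ?_
        filter_upwards [ae_restrict_mem measurableSet_Ioi] with x hx
        have hx1 : (1:ℝ) < x := hx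
        have hxa : (0:ℝ) < x ^ α := Real.rpow_pos_of_pos (by linarith) α
        have hub : (0:ℝ) < -c * x ^ α := by nlinarith
        have hu1 : -c * x ^ α ≤ 1 - c * x ^ α := by nlinarith
        have hmax : max (1 - c * x ^ α) 0 = 1 - c * x ^ α := max_eq_left (by nlinarith)
        rw [Real.norm_eq_abs, abs_of_nonneg (Real.rpow_nonneg (le_max_right _ _) p), hmax]
        calc (1 - c * x ^ α) ^ p ≤ (-c * x ^ α) ^ p :=
              Real.rpow_le_rpow_of_nonpos hub hu1 hp0.le
          _ = (-c) ^ p * x ^ (α * p) := by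
              rw [Real.mul_rpow (by linarith) hxa.le, Real.rpow_mul (by linarith : (0:ℝ) ≤ x)]
      have := h01.union h1i
      rwa [Icc_union_Ioi_eq_Ici (by norm_num : (0:ℝ) ≤ 1)] at this
    have : IntegrableOn (fun x : ℝ => max (1 - c * |x| ^ α) 0 ^ p) (Ici 0) := by
      refine key.congr_fun (fun x hx => ?_) measurableSet_Ici
      rw [abs_of_nonneg hx]
    exact integrable_comp_abs_of (f := fun t => max (1 - c * t ^ α) 0 ^ p) this

private lemma ibp_key {α c p : ℝ} (hα : 1 < α) (hp : p ≠ 0) (hp1 : p + 1 ≠ 0)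
    (h2 : Integrable (fun x : ℝ => max (1 - c * |x| ^ α) 0 ^ (p + 1)))
    (h1 : Integrable (fun x : ℝ => |x| ^ α * max (1 - c * |x| ^ α) 0 ^ p))
    (hcase : (0 < c ∧ 0 < p) ∨ (c < 0 ∧ p + 1 < 0 ∧ 1 + α * (p + 1) < 0)) :
    ∫ x : ℝ, max (1 - c * |x| ^ α) 0 ^ (p + 1)
      = (p + 1) * c * α * ∫ x : ℝ, |x| ^ α * max (1 - c * |x| ^ α) 0 ^ p := by
  have hα0 : (0:ℝ) < α := by linarith
  set g : ℝ → ℝ := fun t => max (1 - c * t ^ α) 0 ^ (p + 1)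
    - (p + 1) * c * α * (t ^ α * max (1 - c * t ^ α) 0 ^ p) with hgdef
  set F : ℝ → ℝ := fun t => t * max (1 - c * t ^ α) 0 ^ (p + 1) with hFdef
  have hgabs : (fun x : ℝ => g |x|) = fun x : ℝ => max (1 - c * |x| ^ α) 0 ^ (p + 1)
      - (p + 1) * c * α * (|x| ^ α * max (1 - c * |x| ^ α) 0 ^ p) := rfl
  have hgint : IntegrableOn g (Ioi 0) := by
    have h3 : Integrable (fun x : ℝ => g |x|) := by
      rw [hgabs]; exact h2.sub (h1.const_mul _)
    exact (h3.integrableOn).congr_fun (fun x hx => by dsimp only; rw [abs_of_pos hx]) measurableSet_Ioi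
  -- derivative of F at positive points inside the support
  have hFderiv : ∀ x : ℝ, 0 < x → 0 < 1 - c * x ^ α → HasDerivAt F (g x) x := by
    intro x hx hu
    have hxa : |x| = x := abs_of_pos hx
    obtain ⟨D, hD, hDabs, hDmul⟩ := abs_rpow_hasDeriv hα hx.ne'
    have hu' : 0 < 1 - c * |x| ^ α := by rwa [hxa]
    have hk := ker_deriv (p := p + 1) hα hx.ne' hu' hD
    have hkev : (fun y : ℝ => max (1 - c * y ^ α) 0 ^ (p + 1)) =ᶠ[nhds x]
        fun y => max (1 - c * |y| ^ α) 0 ^ (p + 1) := by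
      filter_upwards [Ioi_mem_nhds hx] with y hy
      rw [abs_of_pos hy]
    have hk2 : HasDerivAt (fun y : ℝ => max (1 - c * y ^ α) 0 ^ (p + 1))
        ((p + 1) * (1 - c * |x| ^ α) ^ (p + 1 - 1) * (-c * D)) x :=
      hk.congr_of_eventuallyEq hkev
    have hF : HasDerivAt F (1 * max (1 - c * x ^ α) 0 ^ (p + 1)
        + x * ((p + 1) * (1 - c * |x| ^ α) ^ (p + 1 - 1) * (-c * D))) x :=
      (hasDerivAt_id x).mul hk2
    convert hF using 1
    have hmax : max (1 - c * x ^ α) 0 = 1 - c * x ^ α := max_eq_left hu.le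
    have hxD : x * D = α * x ^ α := by rw [hxa] at hDmul; exact hDmul
    have hpow : (1 - c * x ^ α) ^ (p + 1 - 1) = (1 - c * x ^ α) ^ p := by norm_num
    rw [hgdef]
    simp only [hxa, hmax, hpow]
    have : x * ((p + 1) * (1 - c * x ^ α) ^ p * (-c * D))
        = -((p + 1) * c * ((1 - c * x ^ α) ^ p * (x * D))) := by ring
    rw [this, hxD]
    ring
  have main : ∫ x in Ioi (0:ℝ), g x = 0 := by
    rcases hcase with ⟨hc, hppos⟩ | ⟨hc, hp1neg, hexp⟩
    · -- compact support case
      set r : ℝ := (1 / c) ^ (1 / α) with hrdef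
      have hr0 : 0 < r := by positivity
      have hgzero : ∀ x : ℝ, r < x → g x = 0 := by
        intro x hrx
        have h1c : (1:ℝ) / c < x ^ α := by
          rw [← rpow_root_pow hα hc]
          exact Real.rpow_lt_rpow (by positivity) hrx hα0
        have hneg : 1 - c * x ^ α < 0 := by
          rw [sub_neg]
          calc (1:ℝ) = c * (1/c) := by field_simp
          _ < c * x ^ α := (mul_lt_mul_iff_right₀ hc).2 h1c
        rw [hgdef]
        simp only [max_eq_right hneg.le, Real.zero_rpow hp1, Real.zero_rpow hp,
          mul_zero, sub_zero]
      have hsplit : ∫ x in Ioi (0:ℝ), g x = (∫ x in Ioc (0:ℝ) r, g x) + ∫ x in Ioi r, g x := by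
        rw [← Ioc_union_Ioi_eq_Ioi hr0.le]
        exact setIntegral_union (Ioc_disjoint_Ioi le_rfl) measurableSet_Ioi
          (hgint.mono_set Ioc_subset_Ioi_self) (hgint.mono_set (Ioi_subset_Ioi hr0.le))
      have hIoir : ∫ x in Ioi r, g x = 0 := by
        rw [setIntegral_congr_fun measurableSet_Ioi (g := fun _ => (0:ℝ))
          (fun x hx => hgzero x hx)]
        exact integral_zero _ _
      have hIoc : ∫ x in Ioc (0:ℝ) r, g x = 0 := by
        rw [← intervalIntegral.integral_of_le hr0.le]
        have hcont2 : Continuous (fun t : ℝ => max (1 - c * t ^ α) 0 ^ (p + 1)) := by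
          have hxα : Continuous (fun x : ℝ => x ^ α) := by
            rw [continuous_iff_continuousAt]
            exact fun x => Real.continuousAt_rpow_const x α (Or.inr hα0.le)
          have hbase : Continuous (fun x : ℝ => max (1 - c * x ^ α) 0) :=
            Continuous.max (continuous_const.sub (continuous_const.mul hxα)) continuous_const
          rw [continuous_iff_continuousAt]
          intro x
          exact (Real.continuousAt_rpow_const _ _ (Or.inr (by linarith))).comp
            hbase.continuousAt
        have hFc : ContinuousOn F (Icc 0 r) := (continuous_id.mul hcont2).continuousOn
        have hder : ∀ x ∈ Ioo (0:ℝ) r, HasDerivAt F (g x) x := by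
          intro x hx
          apply hFderiv x hx.1
          have hxr : x ^ α < 1 / c := by
            rw [← rpow_root_pow hα hc]
            exact Real.rpow_lt_rpow hx.1.le hx.2 hα0
          rw [sub_pos]
          calc c * x ^ α < c * (1/c) := (mul_lt_mul_iff_right₀ hc).2 hxr
          _ = 1 := by field_simp
        have hiint : IntervalIntegrable g volume 0 r := by
          rw [intervalIntegrable_iff_integrableOn_Ioc_of_le hr0.le]
          exact hgint.mono_set Ioc_subset_Ioi_self
        rw [intervalIntegral.integral_eq_sub_of_hasDerivAt_of_le hr0.le hFc hder hiint]
        have hur : 1 - c * r ^ α = 0 := by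
          rw [rpow_root_pow hα hc]; field_simp; norm_num
        have hFr : F r = 0 := by
          rw [hFdef]
          simp only [hur, max_self, Real.zero_rpow hp1, mul_zero]
        have hF0 : F 0 = 0 := by rw [hFdef]; simp
        rw [hFr, hF0, sub_zero]
      rw [hsplit, hIoir, hIoc, add_zero]
    · -- heavy tail case
      have hubig : ∀ x : ℝ, 0 ≤ x → (1:ℝ) ≤ 1 - c * x ^ α := by
        intro x hx
        nlinarith [Real.rpow_nonneg hx α]
      have hFcont : ContinuousOn F (Ici 0) := by
        have hxα : Continuous (fun x : ℝ => x ^ α) := by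
          rw [continuous_iff_continuousAt]
          exact fun x => Real.continuousAt_rpow_const x α (Or.inr hα0.le)
        have hbase : Continuous (fun x : ℝ => max (1 - c * x ^ α) 0) :=
          Continuous.max (continuous_const.sub (continuous_const.mul hxα)) continuous_const
        apply ContinuousOn.mul continuousOn_id
        apply ContinuousOn.rpow_const hbase.continuousOn
        intro x hx
        left
        have := hubig x hx
        have : (1:ℝ) ≤ max (1 - c * x ^ α) 0 := le_max_of_le_left this
        positivity
      have hder : ∀ x ∈ Ioi (0:ℝ), HasDerivAt F (g x) x := by
        intro x hx
        exact hFderiv x hx (by linarith [hubig x (le_of_lt hx)])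
      have htend : Tendsto F atTop (nhds 0) := by
        have hbound : ∀ x : ℝ, 0 < x → F x ≤ (-c) ^ (p+1) * x ^ (1 + α * (p+1)) := by
          intro x hx
          have hxa : (0:ℝ) < x ^ α := Real.rpow_pos_of_pos hx α
          have hub : (0:ℝ) < -c * x ^ α := by nlinarith
          have hmax : max (1 - c * x ^ α) 0 = 1 - c * x ^ α :=
            max_eq_left (by nlinarith [hubig x hx.le])
          rw [hFdef]
          simp only [hmax]
          calc x * (1 - c * x ^ α) ^ (p+1) ≤ x * (-c * x ^ α) ^ (p+1) := by
                apply mul_le_mul_of_nonneg_left _ hx.le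
                exact Real.rpow_le_rpow_of_nonpos hub (by nlinarith) hp1neg.le
          _ = (-c) ^ (p+1) * x ^ (1 + α * (p+1)) := by
                rw [Real.mul_rpow (by linarith) hxa.le, ← Real.rpow_mul hx.le,
                  Real.rpow_add hx, Real.rpow_one]
                ring
        have hup : Tendsto (fun x : ℝ => (-c) ^ (p+1) * x ^ (1 + α * (p+1))) atTop (nhds 0) := by
          have := tendsto_rpow_neg_atTop (y := -(1 + α * (p+1))) (by linarith)
          simp only [neg_neg] at this
          simpa using this.const_mul ((-c) ^ (p+1))
        apply squeeze_zero' (g := fun x : ℝ => (-c) ^ (p+1) * x ^ (1 + α * (p+1)))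
        · filter_upwards [eventually_gt_atTop (0:ℝ)] with x hx
          rw [hFdef]
          have : (0:ℝ) ≤ max (1 - c * x ^ α) 0 := le_max_right _ _
          positivity
        · filter_upwards [eventually_gt_atTop (0:ℝ)] with x hx
          exact hbound x hx
        · exact hup
      have := integral_Ioi_of_hasDerivAt_of_tendsto
        (hFcont.continuousWithinAt (self_mem_Ici)) hder hgint htend
      rw [this]
      have hF0 : F 0 = 0 := by rw [hFdef]; simp
      rw [hF0, sub_zero]
  have h0 : ∫ x : ℝ, (g |x|) = 0 := by
    rw [integral_comp_abs (f := g), main, mul_zero]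
  have hsplit2 : ∫ x : ℝ, (g |x|) = (∫ x : ℝ, max (1 - c * |x| ^ α) 0 ^ (p + 1))
      - (p + 1) * c * α * ∫ x : ℝ, |x| ^ α * max (1 - c * |x| ^ α) 0 ^ p := by
    show ∫ x : ℝ, (fun x : ℝ => g |x|) x = _
    rw [hgabs, integral_sub h2 (h1.const_mul _), integral_const_mul]
  rw [hsplit2] at h0
  linarith

/-- **Saturation of the generalized q-Cramér–Rao inequality by generalized q-Gaussians.**
For Hölder conjugates `α > 1, β`, `q > 1 − α`, `q ≠ 1`, `γ > 0`, the generalized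
`q`-Gaussian `G(x) = Z⁻¹ (1 − (q−1)γ|x|^α)₊^{1/(q−1)}` saturates the translation
`q`-Cramér–Rao inequality: `E[|x|^α]^(1/α) · I_{β,q}[G]^(1/β) = 1`. -/
theorem q_gaussian_saturates_q_cramer_rao
    (α β q γ : ℝ)
    (hα : 1 < α) (hαβ : 1 / α + 1 / β = 1)
    (hq : 1 - α < q) (hq1 : q ≠ 1) (hγ : 0 < γ)
    (Z : ℝ)
    (hZ : Z = ∫ x : ℝ, max (1 - (q - 1) * γ * |x| ^ α) 0 ^ (1 / (q - 1)))
    (G : ℝ → ℝ)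
    (hG : ∀ x : ℝ, G x = max (1 - (q - 1) * γ * |x| ^ α) 0 ^ (1 / (q - 1)) / Z)
    -- finiteness of the α-moment and of the information generating function
    (hmom : Integrable (fun x : ℝ => |x| ^ α * G x))
    (hMq_int : Integrable (fun x : ℝ => G x ^ q))
    (Mq : ℝ) (hMq : Mq = ∫ x : ℝ, G x ^ q) :
    (∫ x : ℝ, |x| ^ α * G x) ^ (1 / α) *
      ((q / Mq) ^ β *
        ∫ x : ℝ, |G x ^ (q - 1) * deriv G x / G x| ^ β * G x) ^ (1 / β)
      = 1 := by
  have hα0 : (0:ℝ) < α := by linarith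
  set c : ℝ := (q - 1) * γ with hcdef
  set p : ℝ := 1 / (q - 1) with hpdef
  have hq1' : q - 1 ≠ 0 := sub_ne_zero.2 hq1
  have hp : p ≠ 0 := one_div_ne_zero hq1'
  have hpq : p * (q - 1) = 1 := by rw [hpdef]; field_simp
  have hpc : p * c = γ := by rw [hpdef, hcdef]; field_simp
  -- β facts
  have hβ0 : 0 < β := by
    have h1 : 0 < 1 / β := by
      have : 1 / α < 1 := by rw [div_lt_one hα0]; linarith
      linarith
    exact one_div_pos.1 h1
  have hβne : β ≠ 0 := hβ0.ne'
  have hab : (α - 1) * β = α := by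
    have hαne : α ≠ 0 := hα0.ne'
    field_simp at hαβ
    linarith
  set k1 : ℝ → ℝ := fun x => max (1 - c * |x| ^ α) 0 ^ p with hk1def
  set k2 : ℝ → ℝ := fun x => max (1 - c * |x| ^ α) 0 ^ (p + 1) with hk2def
  have hGfun : G = fun x => k1 x / Z := funext hG
  have hcase1 : (0 < c ∧ 0 < p) ∨ (c < 0 ∧ α * p < -1) := by
    rcases lt_or_gt_of_ne hq1 with h | h
    · right
      constructor
      · rw [hcdef]; nlinarith
      · rw [hpdef, mul_one_div, div_lt_iff_of_neg (by linarith : q - 1 < 0)]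
        linarith
    · left
      constructor
      · rw [hcdef]; nlinarith
      · rw [hpdef]; exact one_div_pos.2 (by linarith)
  have hk1int : Integrable k1 := ker_integrable hα hcase1
  have hk1nn : ∀ x, 0 ≤ k1 x := fun x => Real.rpow_nonneg (le_max_right _ _) p
  obtain ⟨m, hm0, hmpos⟩ : ∃ m : ℝ, 0 < m ∧ ∀ x ∈ Ioo (0:ℝ) m, 0 < 1 - c * |x| ^ α := by
    rcases le_or_gt c 0 with h | h
    · exact ⟨1, one_pos, fun x _ =>
        by nlinarith [Real.rpow_nonneg (abs_nonneg x) α]⟩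
    · refine ⟨(1 / c) ^ (1 / α), by positivity, fun x hx => ?_⟩
      have hxa : |x| = x := abs_of_pos hx.1
      have : x ^ α < 1 / c := by
        rw [← rpow_root_pow hα h]
        exact Real.rpow_lt_rpow hx.1.le hx.2 hα0
      rw [hxa, sub_pos]
      calc c * x ^ α < c * (1 / c) := (mul_lt_mul_iff_right₀ h).2 this
      _ = 1 := by field_simp
  have hk1pos : ∀ x ∈ Ioo (0:ℝ) m, 0 < k1 x := by
    intro x hx
    rw [hk1def]
    simp only
    rw [max_eq_left (hmpos x hx).le]
    exact Real.rpow_pos_of_pos (hmpos x hx) p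
  have hZpos : 0 < Z := by
    rw [hZ]
    exact int_pos_of_pos_on hk1int hk1nn hm0 hk1pos
  have hmom' : Integrable (fun x => |x| ^ α * k1 x) := by
    refine (hmom.mul_const Z).congr (Filter.Eventually.of_forall fun x => ?_)
    show |x| ^ α * G x * Z = |x| ^ α * k1 x
    rw [hG x]
    rw [mul_assoc, div_mul_cancel₀ _ hZpos.ne']
  set A : ℝ := ∫ x : ℝ, |x| ^ α * k1 x with hAdef
  have hApos : 0 < A := by
    refine int_pos_of_pos_on hmom' (fun x => mul_nonneg (by positivity) (hk1nn x)) hm0 ?_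
    intro x hx
    have : (0:ℝ) < |x| ^ α := Real.rpow_pos_of_pos (abs_pos.2 (ne_of_gt hx.1)) α
    exact mul_pos this (hk1pos x hx)
  have hEeq : ∫ x : ℝ, |x| ^ α * G x = A / Z := by
    rw [hAdef, ← integral_div]
    congr 1
    funext x
    rw [hG x]
    ring
  have hEpos : 0 < A / Z := div_pos hApos hZpos
  -- k2 relations
  have hpq1 : p * q = p + 1 := by rw [hpdef]; field_simp; ring
  have hGq : ∀ x, G x ^ q = k2 x / Z ^ q := by
    intro x
    rw [hG x, Real.div_rpow (Real.rpow_nonneg (le_max_right _ _) p) hZpos.le,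
      ← Real.rpow_mul (le_max_right _ _), hpq1]
  have hk2int : Integrable k2 := by
    have hZq : (0:ℝ) < Z ^ q := Real.rpow_pos_of_pos hZpos q
    refine (hMq_int.mul_const (Z ^ q)).congr (Filter.Eventually.of_forall fun x => ?_)
    show G x ^ q * Z ^ q = k2 x
    rw [hGq x]
    field_simp
  set T : ℝ := ∫ x : ℝ, k2 x with hTdef
  have hMqT : Mq = T / Z ^ q := by
    rw [hMq, hTdef, ← integral_div]
    congr 1
    funext x
    exact hGq x
  -- positivity of q and the key exponent inequality
  have hq0 : 0 < q := by
    rcases lt_or_gt_of_ne hq1 with hlt | hgt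
    swap
    · linarith
    by_contra hcon
    push_neg at hcon
    have hc : c < 0 := by rw [hcdef]; nlinarith
    have hpneg : p < 0 := by
      rw [hpdef]; exact div_neg_of_pos_of_neg one_pos (by linarith)
    have hGub : ∀ x : ℝ, G x ≤ 1 / Z ∧ 0 < G x := by
      intro x
      have hxnn : (0:ℝ) ≤ |x| ^ α := Real.rpow_nonneg (abs_nonneg x) α
      have hu1 : (1:ℝ) ≤ 1 - c * |x| ^ α := by nlinarith
      have hmax : max (1 - c * |x| ^ α) 0 = 1 - c * |x| ^ α := max_eq_left (by linarith)
      constructor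
      · rw [hG x]
        simp only [hmax]
        have : (1 - c * |x| ^ α) ^ p ≤ 1 :=
          Real.rpow_le_one_of_one_le_of_nonpos hu1 hpneg.le
        gcongr
      · rw [hG x]
        simp only [hmax]
        exact div_pos (Real.rpow_pos_of_pos (by linarith) p) hZpos
    have hcst : (0:ℝ) < (1 / Z) ^ q := Real.rpow_pos_of_pos (by positivity) q
    have hle : ∀ x : ℝ, (1 / Z) ^ q ≤ G x ^ q := fun x =>
      Real.rpow_le_rpow_of_nonpos (hGub x).2 (hGub x).1 hcon
    have hic : Integrable (fun _ : ℝ => (1 / Z) ^ q) volume :=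
      hMq_int.mono' aestronglyMeasurable_const (Filter.Eventually.of_forall fun x => by
        rw [Real.norm_eq_abs, abs_of_pos hcst]; exact hle x)
    rw [integrable_const_iff] at hic
    rcases hic with h | h
    · exact absurd h hcst.ne'
    · have h := h.measure_univ_lt_top
      rw [Real.volume_univ] at h
      exact absurd h (lt_irrefl _)
  have hqa : 1 < q * (α + 1) := by
    rcases lt_or_gt_of_ne hq1 with hlt | hgt
    swap
    · nlinarith
    by_contra hcon
    push_neg at hcon
    have hc : c < 0 := by rw [hcdef]; nlinarith
    have hpneg : p < 0 := by
      rw [hpdef]; exact div_neg_of_pos_of_neg one_pos (by linarith)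
    have hs : -1 ≤ α * (1 + p) := by
      have h1q : q - 1 < 0 := by linarith
      have h2 : α * (1 + p) = α * q / (q - 1) := by
        rw [hpdef]; field_simp; ring
      rw [h2, le_div_iff_of_neg h1q]
      nlinarith
    have hC2 : 0 < (1 - c) ^ p / Z :=
      div_pos (Real.rpow_pos_of_pos (by linarith) p) hZpos
    have hbd : ∀ x : ℝ, 1 < x → (1 - c) ^ p / Z * x ^ (-1:ℝ) ≤ |x| ^ α * G x := by
      intro x hx
      have hx0 : (0:ℝ) < x := by linarith
      have hxa : |x| = x := abs_of_pos hx0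
      have hxαpos : (0:ℝ) < x ^ α := Real.rpow_pos_of_pos hx0 α
      have h1x : (1:ℝ) ≤ x ^ α := by
        calc (1:ℝ) = 1 ^ α := (Real.one_rpow α).symm
        _ ≤ x ^ α := Real.rpow_le_rpow (by norm_num) hx.le hα0.le
      have hu_le : 1 - c * x ^ α ≤ (1 - c) * x ^ α := by nlinarith
      have hu_pos : (0:ℝ) < 1 - c * x ^ α := by nlinarith
      have hstep : ((1 - c) * x ^ α) ^ p ≤ (1 - c * x ^ α) ^ p :=
        Real.rpow_le_rpow_of_nonpos (by nlinarith) hu_le hpneg.le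
      have hexp : ((1 - c) * x ^ α) ^ p = (1 - c) ^ p * x ^ (α * p) := by
        rw [Real.mul_rpow (by linarith) hxαpos.le, ← Real.rpow_mul hx0.le]
      have hxs : x ^ α * x ^ (α * p) = x ^ (α * (1 + p)) := by
        rw [← Real.rpow_add hx0]; ring_nf
      have hx1s : x ^ (-1:ℝ) ≤ x ^ (α * (1 + p)) :=
        Real.rpow_le_rpow_of_exponent_le hx.le hs
      calc (1 - c) ^ p / Z * x ^ (-1:ℝ) ≤ (1 - c) ^ p / Z * x ^ (α * (1 + p)) := by
            apply mul_le_mul_of_nonneg_left hx1s hC2.le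
      _ = x ^ α * ((1 - c) ^ p * x ^ (α * p)) / Z := by rw [← hxs]; ring
      _ ≤ x ^ α * (1 - c * x ^ α) ^ p / Z := by
            rw [← hexp]
            gcongr
      _ = |x| ^ α * G x := by
            rw [hG x, hxa, max_eq_left hu_pos.le]
            ring
    have hmono : IntegrableOn (fun x : ℝ => (1 - c) ^ p / Z * x ^ (-1:ℝ)) (Ioi 1) := by
      refine Integrable.mono' (hmom.integrableOn) ?_ ?_
      · exact (((measurable_id.pow measurable_const).const_mul _).aestronglyMeasurable).restrict
      · filter_upwards [ae_restrict_mem measurableSet_Ioi] with x hx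
        have hx1 : (1:ℝ) < x := hx
        have hx0 : (0:ℝ) < x := by linarith
        rw [Real.norm_eq_abs, abs_of_nonneg (by positivity)]
        exact hbd x hx1
    have hint1 : IntegrableOn (fun x : ℝ => x ^ (-1:ℝ)) (Ioi 1) := by
      have h2 := hmono.const_mul ((1 - c) ^ p / Z)⁻¹
      refine h2.congr (Filter.Eventually.of_forall fun x => ?_)
      show ((1 - c) ^ p / Z)⁻¹ * ((1 - c) ^ p / Z * x ^ (-1:ℝ)) = x ^ (-1:ℝ)
      rw [inv_mul_eq_div, mul_comm, mul_div_assoc, div_self hC2.ne', mul_one]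
    rw [integrableOn_Ioi_rpow_iff one_pos] at hint1
    linarith
  -- integration by parts
  have hp1c : (p + 1) * c = q * γ := by rw [hpdef, hcdef]; field_simp; ring
  have hcase2 : (0 < c ∧ 0 < p) ∨ (c < 0 ∧ p + 1 < 0 ∧ 1 + α * (p + 1) < 0) := by
    rcases lt_or_gt_of_ne hq1 with h | h
    · right
      have hc : c < 0 := by rw [hcdef]; nlinarith
      have hp1 : p + 1 = q / (q - 1) := by rw [hpdef]; field_simp; ring
      refine ⟨hc, ?_, ?_⟩
      · rw [hp1]
        exact div_neg_of_pos_of_neg hq0 (by linarith)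
      · rw [hp1, mul_div_assoc']
        have : α * q / (q - 1) < -1 := by
          rw [div_lt_iff_of_neg (by linarith : q - 1 < 0)]
          nlinarith
        linarith
    · left
      exact hcase1.resolve_right (fun hh => absurd hh.1 (by rw [hcdef]; nlinarith))
  have hp1ne : p + 1 ≠ 0 := by
    rcases hcase2 with ⟨_, h⟩ | ⟨_, h, _⟩
    · positivity
    · exact h.ne
  have hT : T = (p + 1) * c * α * A := ibp_key hα hp hp1ne hk2int hmom' hcase2
  have hTqa : T = q * γ * α * A := by rw [hT, hp1c]
  have hTpos : 0 < T := by rw [hTqa]; positivity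
  have hMqpos : 0 < Mq := by rw [hMqT]; positivity
  -- the information integrand
  set K : ℝ := (γ * α / Z ^ (q - 1)) ^ β with hKdef
  have hZq1 : (0:ℝ) < Z ^ (q - 1) := Real.rpow_pos_of_pos hZpos (q - 1)
  have hae : (fun x => |G x ^ (q - 1) * deriv G x / G x| ^ β * G x)
      =ᵐ[volume] fun x => K * (|x| ^ α * G x) := by
    have hN : volume ({0, (1/c) ^ (1/α), -((1/c) ^ (1/α))} : Set ℝ) = 0 :=
      (Set.toFinite _).measure_zero volume
    have hN' : ∀ᵐ x : ℝ, x ∉ ({0, (1/c) ^ (1/α), -((1/c) ^ (1/α))} : Set ℝ) :=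
      measure_eq_zero_iff_ae_notMem.1 hN
    filter_upwards [hN'] with x hxN
    show |G x ^ (q - 1) * deriv G x / G x| ^ β * G x = K * (|x| ^ α * G x)
    have hx0 : x ≠ 0 := fun h => hxN (by simp [h])
    have hur : 1 - c * |x| ^ α ≠ 0 := by
      intro h
      have habs : (0:ℝ) < |x| ^ α := Real.rpow_pos_of_pos (abs_pos.2 hx0) α
      have hc : 0 < c := by nlinarith
      have hxar : |x| ^ α = 1 / c := by
        rw [eq_div_iff hc.ne']; nlinarith
      have hxr : |x| = (1/c) ^ (1/α) := by
        have h1 : (|x| ^ α) ^ (1/α) = |x| := by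
          rw [← Real.rpow_mul (abs_nonneg x), mul_one_div_cancel hα0.ne', Real.rpow_one]
        rw [← h1, hxar]
      have hrnn : (0:ℝ) ≤ (1/c) ^ (1/α) := Real.rpow_nonneg (by positivity) _
      rcases (abs_eq hrnn).1 hxr with h | h
      · exact hxN (by simp [h])
      · exact hxN (by simp [h])
    rcases hur.lt_or_gt with hu | hu
    · have hGx : G x = 0 := by
        rw [hG x, max_eq_right hu.le, Real.zero_rpow hp, zero_div]
      rw [hGx, mul_zero, mul_zero, mul_zero]
    · obtain ⟨D, hD, hDabs, hDmul⟩ := abs_rpow_hasDeriv hα hx0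
      have hk := ker_deriv (p := p) hα hx0 hu hD
      have hGder : deriv G x = p * (1 - c * |x| ^ α) ^ (p - 1) * (-c * D) / Z := by
        have hh : HasDerivAt G (p * (1 - c * |x| ^ α) ^ (p - 1) * (-c * D) / Z) x := by
          rw [hGfun]; exact hk.div_const Z
        exact hh.deriv
      have hGx : G x = (1 - c * |x| ^ α) ^ p / Z := by
        rw [hG x, max_eq_left hu.le]
      have hupp : (1 - c * |x| ^ α) * (1 - c * |x| ^ α) ^ (p - 1)
          = (1 - c * |x| ^ α) ^ p := by
        rw [show p = 1 + (p - 1) by ring, Real.rpow_add hu, Real.rpow_one]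
        ring_nf
      have hupne : (1 - c * |x| ^ α) ^ p ≠ 0 := (Real.rpow_pos_of_pos hu p).ne'
      have hX : G x ^ (q - 1) * deriv G x / G x = p * (-c * D) / Z ^ (q - 1) := by
        have alg : ∀ (U V Up W Zv E pp : ℝ), Up ≠ 0 → W ≠ 0 → Zv ≠ 0 → U * V = Up →
            U / W * (pp * V * E / Zv) / (Up / Zv) = pp * E / W := by
          intro U V Up W Zv E pp hUp hW hZv h
          field_simp
          linear_combination (pp * E) * h
        rw [hGx, hGder,
          Real.div_rpow (Real.rpow_nonneg (by linarith) p) hZpos.le,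
          ← Real.rpow_mul hu.le, hpq, Real.rpow_one]
        exact alg _ _ _ _ _ _ _ hupne hZq1.ne' hZpos.ne' hupp
      have habsX : |p * (-c * D) / Z ^ (q - 1)| = γ * α * |x| ^ (α - 1) / Z ^ (q - 1) := by
        rw [abs_div, abs_of_pos hZq1]
        congr 1
        rw [show p * (-c * D) = -(p * c * D) by ring, abs_neg, abs_mul, hpc,
          abs_of_pos hγ, hDabs]
        ring
      rw [hX, habsX]
      have h5 : γ * α * |x| ^ (α - 1) / Z ^ (q - 1)
          = γ * α / Z ^ (q - 1) * |x| ^ (α - 1) := by ring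
      rw [h5, Real.mul_rpow (by positivity) (Real.rpow_nonneg (abs_nonneg x) _),
        ← Real.rpow_mul (abs_nonneg x), hab, hKdef]
      ring
  have hI : ∫ x : ℝ, |G x ^ (q - 1) * deriv G x / G x| ^ β * G x = K * (A / Z) := by
    rw [integral_congr_ae hae, integral_const_mul, hEeq]
  -- final computation
  rw [hEeq, hI]
  have hW : 0 < q * γ * α / (Mq * Z ^ (q - 1)) := by positivity
  have hstep1 : (q / Mq) ^ β * K = (q * γ * α / (Mq * Z ^ (q - 1))) ^ β := by
    rw [hKdef, ← Real.mul_rpow (by positivity) (by positivity)]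
    congr 1
    field_simp
  rw [show (q / Mq) ^ β * (K * (A / Z)) = (q / Mq) ^ β * K * (A / Z) by ring, hstep1]
  have hstep2 : ((q * γ * α / (Mq * Z ^ (q - 1))) ^ β * (A / Z)) ^ (1 / β)
      = (q * γ * α / (Mq * Z ^ (q - 1))) * (A / Z) ^ (1 / β) := by
    rw [Real.mul_rpow (Real.rpow_nonneg hW.le β) hEpos.le, ← Real.rpow_mul hW.le,
      mul_one_div_cancel hβne, Real.rpow_one]
  rw [hstep2]
  rw [show (A / Z) ^ (1 / α) * (q * γ * α / (Mq * Z ^ (q - 1)) * (A / Z) ^ (1 / β))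
      = q * γ * α / (Mq * Z ^ (q - 1)) * ((A / Z) ^ (1 / α) * (A / Z) ^ (1 / β)) by ring,
    ← Real.rpow_add hEpos, hαβ, Real.rpow_one]
  have hZsub : Z ^ (q - 1) = Z ^ q / Z := by
    rw [Real.rpow_sub hZpos, Real.rpow_one]
  rw [hZsub, hMqT, hTqa]
  have hZqpos : (0:ℝ) < Z ^ q := Real.rpow_pos_of_pos hZpos q
  field_simp
end
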